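/- For $j = 1, \dots, p$ let $\hat{\gamma}_j \sim \mathrm{N}(\gamma_j, \sigma_{Xj}^2)$ and $\hat{\Gamma}_j \sim \mathrm{N}(\beta\gamma_j, \sigma_{Yj}^2)$ be mutually independent, with $\sigma_{Xj}, \sigma_{Yj} > 0$. Let $W_j(\beta) = \hat{\gamma}_j/\sigma_{Xj}^2 + \beta\hat{\Gamma}_j/\sigma_{Yj}^2$, and let $t_j(\beta) = (\hat{\Gamma}_j - \beta\hat{\gamma}_j)/\sqrt{\beta^2\sigma_{Xj}^2 + \sigma_{Yj}^2}$. Let $f_j : \mathbb{R} \times \mathbb{R} \to \mathbb{R}$ be measurable functions and $\psi : \mathbb{R} \to \mathbb{R}$ a measurable odd function (i.e., $\psi(-t) = -\psi(t)$), such that each $f_j(\beta, W_j(\beta))$ and $\psi(t_j(\beta))$ are integrable. Then the estimating function $C(\beta) = \sum_{j=1}^p f_j(\beta, W_j(\beta)) \cdot \psi(t_j(\beta)) / \sqrt{\beta^2\sigma_{Xj}^2 + \sigma_{Yj}^2}$ is unbiased at the true parameter: $\mathbb{E}[C(\beta)] = 0$. -/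

import Mathlib

open MeasureTheory ProbabilityTheory
open scoped ENNReal NNReal

namespace EstimatingAux

/-- The rotation-type linear map `(x, y) ↦ (a x + b y, a y - b x)` on `ℝ × ℝ`. -/
noncomputable def rotL (a b : ℝ) : (ℝ × ℝ) →ₗ[ℝ] (ℝ × ℝ) where
  toFun p := (a * p.1 + b * p.2, a * p.2 - b * p.1)
  map_add' p q := by ext <;> simp <;> ring
  map_smul' c p := by ext <;> simp <;> ring

lemma rotL_det (a b : ℝ) : LinearMap.det (rotL a b) = a ^ 2 + b ^ 2 := by
  rw [← LinearMap.det_toMatrix (Module.Basis.finTwoProd ℝ), Matrix.det_fin_two]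
  simp [LinearMap.toMatrix_apply, rotL, Module.Basis.coe_finTwoProd_repr, Module.Basis.finTwoProd_zero,
    Module.Basis.finTwoProd_one]
  ring

/-- The product of two standard Gaussians as a density against 2D Lebesgue measure. -/
lemma prod_gaussian_eq_withDensity :
    (gaussianReal 0 1).prod (gaussianReal 0 1)
      = (volume : Measure (ℝ × ℝ)).withDensity
          (fun z => gaussianPDF 0 1 z.1 * gaussianPDF 0 1 z.2) := by
  apply Measure.prod_eq
  intro s t hs ht
  rw [withDensity_apply _ (hs.prod ht), Measure.volume_eq_prod, ← Measure.prod_restrict,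
    lintegral_prod_mul (measurable_gaussianPDF 0 1).aemeasurable
      (measurable_gaussianPDF 0 1).aemeasurable,
    gaussianReal_apply 0 one_ne_zero s, gaussianReal_apply 0 one_ne_zero t]

/-- Rotations preserve the 2D standard Gaussian measure. -/
lemma rot_measurePreserving {a b : ℝ} (hab : a ^ 2 + b ^ 2 = 1) :
    MeasurePreserving (fun p : ℝ × ℝ => (a * p.1 + b * p.2, a * p.2 - b * p.1))
      ((gaussianReal 0 1).prod (gaussianReal 0 1))
      ((gaussianReal 0 1).prod (gaussianReal 0 1)) := by
  set M : ℝ × ℝ → ℝ × ℝ := fun p => (a * p.1 + b * p.2, a * p.2 - b * p.1) with hM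
  have hmeas : Measurable M := by fun_prop
  have hsurj : Function.Surjective M := by
    intro q
    refine ⟨(a * q.1 - b * q.2, b * q.1 + a * q.2), ?_⟩
    simp only [hM]
    ext
    · show a * (a * q.1 - b * q.2) + b * (b * q.1 + a * q.2) = q.1
      linear_combination q.1 * hab
    · show a * (b * q.1 + a * q.2) - b * (a * q.1 - b * q.2) = q.2
      linear_combination q.2 * hab
  have hinj : Function.Injective M := by
    intro p q hpq
    have h1 : a * p.1 + b * p.2 = a * q.1 + b * q.2 := congrArg Prod.fst hpq
    have h2 : a * p.2 - b * p.1 = a * q.2 - b * q.1 := congrArg Prod.snd hpq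
    ext
    · linear_combination a * h1 - b * h2 + (q.1 - p.1) * hab
    · linear_combination b * h1 + a * h2 + (q.2 - p.2) * hab
  set Mc : (ℝ × ℝ) →L[ℝ] (ℝ × ℝ) := (rotL a b).toContinuousLinearMap with hMc
  have hder : ∀ x : ℝ × ℝ, HasFDerivAt M Mc x := fun x => Mc.hasFDerivAt
  have hdet : Mc.det = 1 := by
    rw [ContinuousLinearMap.det]
    have h : (Mc : (ℝ × ℝ) →ₗ[ℝ] (ℝ × ℝ)) = rotL a b := LinearMap.coe_toContinuousLinearMap _
    rw [h, rotL_det, hab]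
  have hre : ∀ p : ℝ × ℝ,
      gaussianPDF 0 1 (M p).1 * gaussianPDF 0 1 (M p).2
        = gaussianPDF 0 1 p.1 * gaussianPDF 0 1 p.2 := by
    intro p
    simp only [hM, gaussianPDF]
    rw [← ENNReal.ofReal_mul (gaussianPDFReal_nonneg _ _ _),
      ← ENNReal.ofReal_mul (gaussianPDFReal_nonneg _ _ _)]
    congr 1
    simp only [gaussianPDFReal]
    rw [mul_mul_mul_comm, ← Real.exp_add, mul_mul_mul_comm, ← Real.exp_add]
    congr 1
    rw [Real.exp_eq_exp]
    push_cast
    linear_combination (-(p.1 ^ 2 + p.2 ^ 2) / 2) * hab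
  refine ⟨hmeas, ?_⟩
  rw [prod_gaussian_eq_withDensity]
  ext A hA
  rw [Measure.map_apply hmeas hA, withDensity_apply _ (hmeas hA), withDensity_apply _ hA]
  have himg : M '' (M ⁻¹' A) = A := Set.image_preimage_eq A hsurj
  have key := lintegral_image_eq_lintegral_abs_det_fderiv_mul (volume : Measure (ℝ × ℝ))
      (hmeas hA) (f' := fun _ => Mc)
      (fun x _ => (hder x).hasFDerivWithinAt) (hinj.injOn)
      (fun z => gaussianPDF 0 1 z.1 * gaussianPDF 0 1 z.2)
  rw [himg] at key
  rw [key]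
  simp only [hdet, abs_one, ENNReal.ofReal_one, one_mul, hre]

/-- Standardizing an affine Gaussian to the standard Gaussian. -/
lemma gaussian_normalize {m σ : ℝ} (hσ : 0 < σ) :
    MeasurePreserving (fun x => (x - m) / σ)
      (gaussianReal m (Real.toNNReal (σ ^ 2))) (gaussianReal 0 1) := by
  have hmeas : Measurable fun x : ℝ => (x - m) / σ := by fun_prop
  refine ⟨hmeas, ?_⟩
  have hcomp : (fun x : ℝ => (x - m) / σ) = (fun x : ℝ => σ⁻¹ * x) ∘ (fun x : ℝ => x + (-m)) := by
    funext x
    simp only [Function.comp_apply]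
    ring
  rw [hcomp, ← Measure.map_map (by fun_prop) (by fun_prop), gaussianReal_map_add_const,
    gaussianReal_map_const_mul]
  rw [show σ⁻¹ * (m + -m) = 0 by ring]
  congr 1
  rw [← NNReal.coe_inj, NNReal.coe_mul, NNReal.coe_mk, Real.coe_toNNReal _ (sq_nonneg σ),
    NNReal.coe_one]
  field_simp

/-- An odd integrand has zero integral against the standard Gaussian. -/
lemma integral_odd_gaussian_zero {ψ : ℝ → ℝ} (hψ : Measurable ψ)
    (hodd : ∀ t, ψ (-t) = -ψ t) :
    ∫ x, ψ x ∂(gaussianReal 0 1) = 0 := by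
  have hneg : (gaussianReal 0 1).map (fun x : ℝ => -x) = gaussianReal 0 1 := by
    have h : (fun x : ℝ => -x) = (fun x : ℝ => (-1 : ℝ) * x) := by funext x; ring
    rw [h, gaussianReal_map_const_mul]
    rw [show (-1 : ℝ) * 0 = 0 by ring]
    congr 1
    rw [← NNReal.coe_inj, NNReal.coe_mul, NNReal.coe_mk, NNReal.coe_one]
    norm_num
  have h1 : ∫ x, ψ x ∂(gaussianReal 0 1) = ∫ x, ψ (-x) ∂(gaussianReal 0 1) := by
    conv_lhs => rw [← hneg]
    rw [integral_map (by fun_prop) hψ.aestronglyMeasurable]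
  have h2 : ∫ x, ψ (-x) ∂(gaussianReal 0 1) = - ∫ x, ψ x ∂(gaussianReal 0 1) := by
    simp only [hodd]
    exact integral_neg _
  linarith [h1, h2]

end EstimatingAux

open EstimatingAux

theorem estimating_function_unbiased
    {Ω : Type*} [MeasurableSpace Ω] (μ : Measure Ω) [IsProbabilityMeasure μ]
    (p : ℕ) (γhat Γhat : Fin p → Ω → ℝ)
    (hγhat : ∀ j, Measurable (γhat j)) (hΓhat : ∀ j, Measurable (Γhat j))
    (β : ℝ) (γ σX σY : Fin p → ℝ) (hσX : ∀ j, 0 < σX j) (hσY : ∀ j, 0 < σY j)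
    (hγlaw : ∀ j, μ.map (γhat j) = gaussianReal (γ j) (Real.toNNReal ((σX j) ^ 2)))
    (hΓlaw : ∀ j, μ.map (Γhat j) = gaussianReal (β * γ j) (Real.toNNReal ((σY j) ^ 2)))
    (hindep : iIndepFun (Sum.elim γhat Γhat) μ)
    (f : Fin p → ℝ × ℝ → ℝ) (hf : ∀ j, Measurable (f j))
    (ψ : ℝ → ℝ) (hψ : Measurable ψ) (hψodd : ∀ t, ψ (-t) = -ψ t)
    (hfint : ∀ j, Integrable
      (fun ω => f j (β, γhat j ω / (σX j) ^ 2 + β * Γhat j ω / (σY j) ^ 2)) μ)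
    (hψint : ∀ j, Integrable
      (fun ω => ψ ((Γhat j ω - β * γhat j ω) / Real.sqrt (β ^ 2 * (σX j) ^ 2 + (σY j) ^ 2)))
      μ) :
    ∫ ω, (∑ j : Fin p,
        f j (β, γhat j ω / (σX j) ^ 2 + β * Γhat j ω / (σY j) ^ 2)
          * ψ ((Γhat j ω - β * γhat j ω) / Real.sqrt (β ^ 2 * (σX j) ^ 2 + (σY j) ^ 2))
          / Real.sqrt (β ^ 2 * (σX j) ^ 2 + (σY j) ^ 2)) ∂μ = 0 := by
  have key : ∀ j : Fin p,
      Integrable (fun ω =>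
        f j (β, γhat j ω / (σX j) ^ 2 + β * Γhat j ω / (σY j) ^ 2)
          * ψ ((Γhat j ω - β * γhat j ω) / Real.sqrt (β ^ 2 * (σX j) ^ 2 + (σY j) ^ 2))
          / Real.sqrt (β ^ 2 * (σX j) ^ 2 + (σY j) ^ 2)) μ ∧
      ∫ ω, (f j (β, γhat j ω / (σX j) ^ 2 + β * Γhat j ω / (σY j) ^ 2)
          * ψ ((Γhat j ω - β * γhat j ω) / Real.sqrt (β ^ 2 * (σX j) ^ 2 + (σY j) ^ 2))
          / Real.sqrt (β ^ 2 * (σX j) ^ 2 + (σY j) ^ 2)) ∂μ = 0 := by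
    intro j
    have hsx := hσX j
    have hsy := hσY j
    have hX := hγhat j
    have hY := hΓhat j
    set sx := σX j with hsxdef
    set sy := σY j with hsydef
    set g0 := γ j with hg0def
    set s : ℝ := Real.sqrt (β ^ 2 * sx ^ 2 + sy ^ 2) with hsdef
    have hs2 : s ^ 2 = β ^ 2 * sx ^ 2 + sy ^ 2 := Real.sq_sqrt (by positivity)
    have hspos : 0 < s := Real.sqrt_pos.mpr (by positivity)
    set a : ℝ := sy / s with hadef
    set b : ℝ := β * sx / s with hbdef
    have hab : a ^ 2 + b ^ 2 = 1 := by
      have h : a ^ 2 + b ^ 2 = (β ^ 2 * sx ^ 2 + sy ^ 2) / s ^ 2 := by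
        rw [hadef, hbdef, div_pow, div_pow]
        ring
      rw [h, ← hs2]
      exact div_self (pow_ne_zero 2 hspos.ne')
    -- normalizations
    have hn1 : MeasurePreserving (fun x => (x - g0) / sx)
        (gaussianReal g0 (Real.toNNReal (sx ^ 2))) (gaussianReal 0 1) := gaussian_normalize hsx
    have hn2 : MeasurePreserving (fun x => (x - β * g0) / sy)
        (gaussianReal (β * g0) (Real.toNNReal (sy ^ 2))) (gaussianReal 0 1) :=
      gaussian_normalize hsy
    -- joint law
    have hXY : IndepFun (γhat j) (Γhat j) μ := by
      have h := hindep.indepFun (i := Sum.inl j) (j := Sum.inr j) (by simp)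
      simpa using h
    have hpair : μ.map (fun ω => (γhat j ω, Γhat j ω))
        = (gaussianReal g0 (Real.toNNReal (sx ^ 2))).prod
            (gaussianReal (β * g0) (Real.toNNReal (sy ^ 2))) := by
      rw [(indepFun_iff_map_prod_eq_prod_map_map hX.aemeasurable
        hY.aemeasurable).mp hXY, hγlaw j, hΓlaw j]
    -- the standardized pair
    set q : Ω → ℝ × ℝ := fun ω =>
      (a * ((γhat j ω - g0) / sx) + b * ((Γhat j ω - β * g0) / sy),
       a * ((Γhat j ω - β * g0) / sy) - b * ((γhat j ω - g0) / sx)) with hqdef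
    have hq_meas : Measurable q := by fun_prop
    have h1 : μ.map (fun ω => ((γhat j ω - g0) / sx, (Γhat j ω - β * g0) / sy))
        = (gaussianReal 0 1).prod (gaussianReal 0 1) := by
      have hc : (fun ω => ((γhat j ω - g0) / sx, (Γhat j ω - β * g0) / sy))
          = (Prod.map (fun x => (x - g0) / sx) (fun x => (x - β * g0) / sy))
            ∘ (fun ω => (γhat j ω, Γhat j ω)) := rfl
      rw [hc, ← Measure.map_map (hn1.measurable.prodMap hn2.measurable)
        (hX.prodMk hY), hpair, (hn1.prod hn2).map_eq]
    have hqlaw : μ.map q = (gaussianReal 0 1).prod (gaussianReal 0 1) := by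
      have hc : q = (fun p : ℝ × ℝ => (a * p.1 + b * p.2, a * p.2 - b * p.1))
          ∘ (fun ω => ((γhat j ω - g0) / sx, (Γhat j ω - β * g0) / sy)) := rfl
      rw [hc, ← Measure.map_map (rot_measurePreserving hab).measurable (by fun_prop), h1,
        (rot_measurePreserving hab).map_eq]
    -- pointwise identities
    have hI : ∀ ω, γhat j ω / sx ^ 2 + β * Γhat j ω / sy ^ 2
        = (g0 / sx ^ 2 + β ^ 2 * g0 / sy ^ 2) + (s / (sx * sy)) * (q ω).1 := by
      intro ω
      have hq1 : (q ω).1 = a * ((γhat j ω - g0) / sx) + b * ((Γhat j ω - β * g0) / sy) := rfl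
      rw [hq1, hadef, hbdef]
      field_simp
      ring
    have hII : ∀ ω, (Γhat j ω - β * γhat j ω) / s = (q ω).2 := by
      intro ω
      have hq2 : (q ω).2 = a * ((Γhat j ω - β * g0) / sy) - b * ((γhat j ω - g0) / sx) := rfl
      rw [hq2, hadef, hbdef]
      field_simp
      ring
    set F₁ : ℝ → ℝ := fun z => f j (β, (g0 / sx ^ 2 + β ^ 2 * g0 / sy ^ 2) + (s / (sx * sy)) * z)
      with hF₁def
    set F₂ : ℝ → ℝ := fun z => ψ z / s with hF₂def
    have hF₁m : Measurable F₁ := (hf j).comp (by fun_prop)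
    have hF₂m : Measurable F₂ := hψ.div_const s
    have hterm_eq : ∀ ω,
        f j (β, γhat j ω / sx ^ 2 + β * Γhat j ω / sy ^ 2)
          * ψ ((Γhat j ω - β * γhat j ω) / s) / s
        = F₁ (q ω).1 * F₂ (q ω).2 := by
      intro ω
      rw [hI ω, hII ω, mul_div_assoc]
    -- marginal laws
    have hq1law : μ.map (fun ω => (q ω).1) = gaussianReal 0 1 := by
      have hc : (fun ω => (q ω).1) = Prod.fst ∘ q := rfl
      rw [hc, ← Measure.map_map measurable_fst hq_meas, hqlaw, Measure.map_fst_prod]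
      simp
    have hq2law : μ.map (fun ω => (q ω).2) = gaussianReal 0 1 := by
      have hc : (fun ω => (q ω).2) = Prod.snd ∘ q := rfl
      rw [hc, ← Measure.map_map measurable_snd hq_meas, hqlaw, Measure.map_snd_prod]
      simp
    -- integrability of the factors
    have hF₁int : Integrable F₁ (gaussianReal 0 1) := by
      rw [← hq1law]
      rw [integrable_map_measure hF₁m.aestronglyMeasurable (by fun_prop)]
      refine (hfint j).congr (Filter.Eventually.of_forall fun ω => ?_)
      exact congrArg (fun z => f j (β, z)) (hI ω)
    have hψN : Integrable ψ (gaussianReal 0 1) := by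
      rw [← hq2law]
      rw [integrable_map_measure hψ.aestronglyMeasurable (by fun_prop)]
      refine (hψint j).congr (Filter.Eventually.of_forall fun ω => ?_)
      exact congrArg ψ (hII ω)
    have hF₂int : Integrable F₂ (gaussianReal 0 1) := hψN.div_const s
    have hprodint : Integrable (fun z : ℝ × ℝ => F₁ z.1 * F₂ z.2)
        ((gaussianReal 0 1).prod (gaussianReal 0 1)) := hF₁int.mul_prod hF₂int
    have hFmeas : AEStronglyMeasurable (fun z : ℝ × ℝ => F₁ z.1 * F₂ z.2)
        ((gaussianReal 0 1).prod (gaussianReal 0 1)) :=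
      ((hF₁m.comp measurable_fst).mul (hF₂m.comp measurable_snd)).aestronglyMeasurable
    have hFmeas' : AEStronglyMeasurable (fun z : ℝ × ℝ => F₁ z.1 * F₂ z.2) (μ.map q) := by
      rw [hqlaw]; exact hFmeas
    have hprodint' : Integrable (fun z : ℝ × ℝ => F₁ z.1 * F₂ z.2) (μ.map q) := by
      rw [hqlaw]; exact hprodint
    have hterm_int : Integrable (fun ω =>
        f j (β, γhat j ω / sx ^ 2 + β * Γhat j ω / sy ^ 2)
          * ψ ((Γhat j ω - β * γhat j ω) / s) / s) μ := by
      have h := (integrable_map_measure hFmeas' hq_meas.aemeasurable).mp hprodint'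
      refine h.congr (Filter.Eventually.of_forall fun ω => ?_)
      exact (hterm_eq ω).symm
    refine ⟨hterm_int, ?_⟩
    calc ∫ ω, (f j (β, γhat j ω / sx ^ 2 + β * Γhat j ω / sy ^ 2)
          * ψ ((Γhat j ω - β * γhat j ω) / s) / s) ∂μ
        = ∫ ω, F₁ (q ω).1 * F₂ (q ω).2 ∂μ :=
          integral_congr_ae (Filter.Eventually.of_forall hterm_eq)
      _ = ∫ z, F₁ z.1 * F₂ z.2 ∂((gaussianReal 0 1).prod (gaussianReal 0 1)) := by
          rw [← hqlaw, integral_map hq_meas.aemeasurable hFmeas']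
      _ = (∫ z, F₁ z ∂(gaussianReal 0 1)) * ∫ z, F₂ z ∂(gaussianReal 0 1) :=
          integral_prod_mul F₁ F₂
      _ = 0 := by
          have h2 : ∫ z, ψ z / s ∂(gaussianReal 0 1) = 0 := by
            rw [integral_div, integral_odd_gaussian_zero hψ hψodd, zero_div]
          rw [show (∫ z, F₂ z ∂(gaussianReal 0 1)) = ∫ z, ψ z / s ∂(gaussianReal 0 1) from rfl,
            h2, mul_zero]
  rw [integral_finset_sum _ fun j _ => (key j).1]
  exact Finset.sum_eq_zero fun j _ => (key j).2
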